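/- Let 1 < p < q < ∞ and let (u,v) be weights on ℝⁿ. If M : L^{q'}(u^{1-q'}) → L^{p'}(v^{1-p'}) is bounded, then for any dyadic grid 𝒟, sparse family 𝒮 ⊂ 𝒟, and R ∈ 𝒟, the dual testing condition (∫ T^R(uχ_R)(x)^{p'} v(x)^{1-p'} dx)^{1/p'} ≤ C (∫_R u dx)^{1/q'} holds, where T^R f = Σ_{Q ∈ 𝒮, Q ⊇ R} f_Q χ_Q and C depends only on n, p, q and the operator norm of M. -/

import Mathlib

open MeasureTheory Set
open scoped ENNReal
noncomputable section

/-- Axis-parallel half-open cube with corner `a` and side length `l`. -/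
def cube (n : ℕ) (a : Fin n → ℝ) (l : ℝ) : Set (Fin n → ℝ) :=
  Set.univ.pi fun i => Set.Ico (a i) (a i + l)

/-- A (generalized) dyadic grid in ℝⁿ. -/
structure DyadicGrid (n : ℕ) where
  carrier : Set (Set (Fin n → ℝ))
  shape : ∀ Q ∈ carrier, ∃ (a : Fin n → ℝ) (k : ℤ), Q = cube n a ((2 : ℝ) ^ k)
  nested : ∀ Q ∈ carrier, ∀ P ∈ carrier, (Q ∩ P).Nonempty → Q ⊆ P ∨ P ⊆ Q
  partition : ∀ (k : ℤ) (x : Fin n → ℝ),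
    ∃! Q, Q ∈ carrier ∧ (∃ a, Q = cube n a ((2 : ℝ) ^ k)) ∧ x ∈ Q

/-- Hardy–Littlewood maximal function: supremum of averages over axis-parallel
cubes containing `x`. -/
def hlMaximal (n : ℕ) (f : (Fin n → ℝ) → ℝ≥0∞) (x : Fin n → ℝ) : ℝ≥0∞ :=
  ⨆ (a : Fin n → ℝ) (l : ℝ) (_ : 0 < l) (_ : x ∈ cube n a l),
    (∫⁻ y in cube n a l, f y) / volume (cube n a l)

/-- Dyadic maximal function associated with a dyadic grid `D`. -/
def dyMaximal {n : ℕ} (D : DyadicGrid n) (f : (Fin n → ℝ) → ℝ≥0∞) (x : Fin n → ℝ) : ℝ≥0∞ :=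
  ⨆ (Q : Set (Fin n → ℝ)) (_ : Q ∈ D.carrier) (_ : x ∈ Q),
    (∫⁻ y in Q, f y) / volume Q

/-- A sparse family inside the dyadic grid `D`, given as an indexed family
`F k = {Q_j^k}_j`: the cubes at each generation are pairwise disjoint,
`Ω_{k+1} ⊆ Ω_k` where `Ω_k = ⋃₀ F k`, and `|Ω_{k+1} ∩ Q| ≤ |Q|/2` for `Q ∈ F k`. -/
def IsSparse {n : ℕ} (D : DyadicGrid n) (F : ℤ → Set (Set (Fin n → ℝ))) : Prop :=
  (∀ k, F k ⊆ D.carrier) ∧ (∀ k, (F k).Pairwise Disjoint) ∧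
  (∀ k, ⋃₀ F (k + 1) ⊆ ⋃₀ F k) ∧
  (∀ k, ∀ Q ∈ F k, volume (⋃₀ F (k + 1) ∩ Q) ≤ volume Q / 2)

/-- The sparse (positive dyadic) operator `𝒜 f = Σ_{Q ∈ 𝒮} f_Q χ_Q` associated
with the sparse family `F`. -/
def sparseOp {n : ℕ} (F : ℤ → Set (Set (Fin n → ℝ))) (f : (Fin n → ℝ) → ℝ≥0∞)
    (x : Fin n → ℝ) : ℝ≥0∞ :=
  ∑' Q : {Q : Set (Fin n → ℝ) // ∃ k, Q ∈ F k},
    ((∫⁻ y in Q.1, f y) / volume Q.1) * Q.1.indicator 1 x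

/-- Outer truncation of the sparse operator:
`T^R f = Σ_{Q ∈ 𝒮, Q ⊇ R} f_Q χ_Q`. -/
def outerOp {n : ℕ} (F : ℤ → Set (Set (Fin n → ℝ))) (R : Set (Fin n → ℝ))
    (f : (Fin n → ℝ) → ℝ≥0∞) (x : Fin n → ℝ) : ℝ≥0∞ :=
  ∑' Q : {Q : Set (Fin n → ℝ) // (∃ k, Q ∈ F k) ∧ R ⊆ Q},
    ((∫⁻ y in Q.1, f y) / volume Q.1) * Q.1.indicator 1 x

lemma measurableSet_cube (n : ℕ) (a : Fin n → ℝ) (l : ℝ) : MeasurableSet (cube n a l) :=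
  MeasurableSet.univ_pi fun _ => measurableSet_Ico

lemma volume_cube (n : ℕ) (a : Fin n → ℝ) {l : ℝ} (hl : 0 ≤ l) :
    volume (cube n a l) = ENNReal.ofReal (l ^ n) := by
  rw [cube, volume_pi_pi]
  simp [Real.volume_Ico, add_sub_cancel_left, ENNReal.ofReal_pow hl]

lemma mem_cube_self (n : ℕ) (a : Fin n → ℝ) {l : ℝ} (hl : 0 < l) : a ∈ cube n a l := by
  intro i _
  exact ⟨le_refl _, by linarith⟩

lemma cube_zero_eq_univ (a : Fin 0 → ℝ) (l : ℝ) : cube 0 a l = univ := by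
  ext y; simp [cube, Set.mem_pi]

lemma outer_le_two_mul_maximal {n : ℕ} (D : DyadicGrid n) (F : ℤ → Set (Set (Fin n → ℝ)))
    (hF : ∀ k, F k ⊆ D.carrier) (R : Set (Fin n → ℝ)) (hR : R ∈ D.carrier)
    (u : (Fin n → ℝ) → ℝ≥0∞) (x : Fin n → ℝ) :
    outerOp F R (R.indicator u) x ≤ 2 * hlMaximal n (R.indicator u) x := by
  classical
  obtain ⟨aR, kR, hRc⟩ := D.shape R hR
  have hRmeas : MeasurableSet R := hRc ▸ measurableSet_cube n aR _
  set f : (Fin n → ℝ) → ℝ≥0∞ := R.indicator u with hf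
  set I : ℝ≥0∞ := ∫⁻ y in R, u y with hI
  have hint : ∀ Q : Set (Fin n → ℝ), R ⊆ Q → (∫⁻ y in Q, f y) = I := by
    intro Q hQ
    rw [lintegral_indicator hRmeas u, Measure.restrict_restrict hRmeas,
      inter_eq_self_of_subset_left hQ]
  have hT : ∀ (a : Fin n → ℝ) (l : ℝ), 0 < l → x ∈ cube n a l →
      (∫⁻ y in cube n a l, f y) / volume (cube n a l) ≤ hlMaximal n f x := by
    intro a l hl hx
    exact le_iSup_of_le a (le_iSup_of_le l (le_iSup_of_le hl (le_iSup_of_le hx (le_refl _))))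
  rcases Nat.eq_zero_or_pos n with hn | hn
  · subst hn
    have huniv : ∀ i : {Q : Set (Fin 0 → ℝ) // (∃ k, Q ∈ F k) ∧ R ⊆ Q}, i.1 = univ := by
      intro i
      obtain ⟨k, hk⟩ := i.2.1
      obtain ⟨a, m, hQ⟩ := D.shape i.1 (hF k hk)
      rw [hQ, cube_zero_eq_univ]
    haveI hss : Subsingleton {Q : Set (Fin 0 → ℝ) // (∃ k, Q ∈ F k) ∧ R ⊆ Q} :=
      ⟨fun i j => Subtype.ext ((huniv i).trans (huniv j).symm)⟩
    rcases isEmpty_or_nonempty {Q : Set (Fin 0 → ℝ) // (∃ k, Q ∈ F k) ∧ R ⊆ Q} with he | hne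
    · rw [outerOp, tsum_empty]
      exact zero_le
    · obtain ⟨i0⟩ := hne
      have h1 : outerOp F R f x = (∫⁻ y in i0.1, f y) / volume i0.1 * i0.1.indicator 1 x :=
        tsum_eq_single i0 (fun b hb => absurd (Subsingleton.elim b i0) hb)
      rw [h1, huniv i0, hint univ (subset_univ R), Set.indicator_univ, Pi.one_apply, mul_one]
      have h2 := hT (fun _ => 0) 1 one_pos (by rw [cube_zero_eq_univ]; trivial)
      rw [cube_zero_eq_univ, hint univ (subset_univ R)] at h2
      calc I / volume univ ≤ hlMaximal 0 f x := h2
        _ ≤ 2 * hlMaximal 0 f x := le_mul_of_one_le_left zero_le one_le_two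
  · have hmem : ∀ i : {Q : Set (Fin n → ℝ) // (∃ k, Q ∈ F k) ∧ R ⊆ Q}, i.1 ∈ D.carrier :=
      fun i => hF i.2.1.choose i.2.1.choose_spec
    have hshape : ∀ i : {Q : Set (Fin n → ℝ) // (∃ k, Q ∈ F k) ∧ R ⊆ Q},
        ∃ (a : Fin n → ℝ) (k : ℤ), i.1 = cube n a ((2:ℝ)^k) :=
      fun i => D.shape i.1 (hmem i)
    set lev : {Q : Set (Fin n → ℝ) // (∃ k, Q ∈ F k) ∧ R ⊆ Q} → ℤ :=
      fun i => (hshape i).choose_spec.choose with hlev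
    have hQ : ∀ i, i.1 = cube n (hshape i).choose ((2:ℝ) ^ lev i) :=
      fun i => (hshape i).choose_spec.choose_spec
    set w : ℤ → ℝ≥0∞ := fun k => ENNReal.ofReal (((2:ℝ)^k) ^ n) with hw
    have hvol : ∀ i, volume i.1 = w (lev i) := fun i => by
      rw [hQ i]; exact volume_cube n _ (zpow_nonneg (by norm_num) _)
    have hxaR : aR ∈ R := hRc ▸ mem_cube_self n aR (zpow_pos two_pos kR)
    have hlb : ∀ i, kR ≤ lev i := by
      intro i
      have hv : volume R ≤ volume i.1 := measure_mono i.2.2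
      rw [hvol i, hRc, volume_cube n aR (zpow_nonneg (by norm_num) _)] at hv
      have h2 : ((2:ℝ)^kR)^n ≤ ((2:ℝ)^(lev i))^n :=
        (ENNReal.ofReal_le_ofReal_iff (by positivity)).mp hv
      have h3 : (2:ℝ)^kR ≤ (2:ℝ)^(lev i) :=
        le_of_pow_le_pow_left₀ hn.ne' (by positivity) h2
      exact (zpow_le_zpow_iff_right₀ (by norm_num : (1:ℝ) < 2)).mp h3
    have hinj : Function.Injective lev := by
      intro i j hij
      obtain ⟨Q, -, hu⟩ := D.partition (lev i) aR
      have hi := hu i.1 ⟨hmem i, ⟨_, hQ i⟩, i.2.2 hxaR⟩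
      have hj := hu j.1 ⟨hmem j, ⟨_, by rw [hQ j, hij]⟩, j.2.2 hxaR⟩
      exact Subtype.ext (hi.trans hj.symm)
    by_cases hex : ∃ i : {Q : Set (Fin n → ℝ) // (∃ k, Q ∈ F k) ∧ R ⊆ Q}, x ∈ i.1
    · obtain ⟨b, hbP, hbmin⟩ := Int.exists_least_of_bdd
        (P := fun k => ∃ i : {Q : Set (Fin n → ℝ) // (∃ k', Q ∈ F k') ∧ R ⊆ Q}, x ∈ i.1 ∧ lev i = k)
        ⟨kR, fun z hz => by obtain ⟨i, -, hzi⟩ := hz; exact hzi ▸ hlb i⟩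
        (by obtain ⟨i, hi⟩ := hex; exact ⟨lev i, i, hi, rfl⟩)
      obtain ⟨i0, hxi0, hlevi0⟩ := hbP
      have hw0 : w b ≠ 0 := by
        rw [hw]; simp only [ne_eq, ENNReal.ofReal_eq_zero, not_le]; positivity
      have hwtop : ∀ k, w k ≠ ⊤ := fun k => ENNReal.ofReal_ne_top
      have hTb : I / w b ≤ hlMaximal n f x := by
        have h2 := hT (hshape i0).choose ((2:ℝ)^(lev i0)) (zpow_pos two_pos _) (hQ i0 ▸ hxi0)
        rw [← hQ i0, hint i0.1 i0.2.2, hvol i0, hlevi0] at h2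
        exact h2
      set g : ℤ → ℝ≥0∞ := fun k => if b ≤ k then I / w k else 0 with hg
      have hterm : ∀ i, (∫⁻ y in i.1, f y) / volume i.1 * i.1.indicator 1 x ≤ g (lev i) := by
        intro i
        by_cases hxi : x ∈ i.1
        · rw [indicator_of_mem hxi, Pi.one_apply, mul_one, hint i.1 i.2.2, hvol i, hg]
          simp only [if_pos (hbmin _ ⟨i, hxi, rfl⟩)]
          exact le_refl _
        · rw [indicator_of_notMem hxi, mul_zero]; exact zero_le
      have hgsupp : Function.support g ⊆ Set.range (fun j : ℕ => b + (j:ℤ)) := by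
        intro k hk
        rw [hg, Function.mem_support] at hk
        have hbk : b ≤ k := by by_contra h; exact hk (if_neg h)
        exact ⟨(k - b).toNat, by show b + ((k - b).toNat : ℤ) = k; omega⟩
      have hinj2 : Function.Injective (fun j : ℕ => b + (j:ℤ)) := by
        intro a c h; simpa using h
      have hgj : ∀ j : ℕ, g (b + (j:ℤ)) = (I / w b) * (((2:ℝ≥0∞)^n)⁻¹) ^ j := by
        intro j
        have hwsplit : w (b + (j:ℤ)) = w b * ((2:ℝ≥0∞)^n) ^ j := by
          show ENNReal.ofReal (((2:ℝ)^(b+(j:ℤ)))^n)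
              = ENNReal.ofReal (((2:ℝ)^b)^n) * ((2:ℝ≥0∞)^n)^j
          have h1 : (2:ℝ)^(b + (j:ℤ)) = (2:ℝ)^b * (2:ℝ)^(j:ℤ) := by
            rw [zpow_add₀ (by norm_num : (2:ℝ) ≠ 0)]
          rw [h1, mul_pow, ENNReal.ofReal_mul (by positivity)]
          congr 1
          rw [zpow_natCast, ← pow_mul, ENNReal.ofReal_pow (by norm_num : (0:ℝ) ≤ 2),
            ENNReal.ofReal_ofNat, pow_mul, ← pow_right_comm]
        show (if b ≤ b + (j:ℤ) then I / w (b + (j:ℤ)) else 0) = I / w b * ((2:ℝ≥0∞)^n)⁻¹ ^ j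
        rw [if_pos (by omega : b ≤ b + (j:ℤ)), hwsplit, div_eq_mul_inv, div_eq_mul_inv,
          ENNReal.mul_inv (Or.inl hw0) (Or.inl (hwtop b)), ← mul_assoc, ← ENNReal.inv_pow]
      calc outerOp F R f x
          ≤ ∑' i : {Q : Set (Fin n → ℝ) // (∃ k, Q ∈ F k) ∧ R ⊆ Q}, g (lev i) :=
            ENNReal.tsum_le_tsum hterm
        _ ≤ ∑' k : ℤ, g k := ENNReal.tsum_comp_le_tsum_of_injective hinj g
        _ = ∑' j : ℕ, g (b + (j:ℤ)) := (Function.Injective.tsum_eq hinj2 hgsupp).symm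
        _ = (I / w b) * (1 - ((2:ℝ≥0∞)^n)⁻¹)⁻¹ := by
            simp only [hgj]; rw [ENNReal.tsum_mul_left, ENNReal.tsum_geometric]
        _ ≤ (I / w b) * 2 := by
            refine mul_le_mul_right ?_ _
            have hr : ((2:ℝ≥0∞)^n)⁻¹ ≤ 2⁻¹ := by
              apply ENNReal.inv_le_inv'
              calc (2:ℝ≥0∞) = 2^1 := (pow_one 2).symm
                _ ≤ 2^n := pow_le_pow_right₀ one_le_two hn
            calc (1 - ((2:ℝ≥0∞)^n)⁻¹)⁻¹ ≤ (1 - 2⁻¹)⁻¹ :=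
                  ENNReal.inv_le_inv' (tsub_le_tsub_left hr 1)
              _ = 2 := by rw [ENNReal.one_sub_inv_two, inv_inv]
        _ = 2 * (I / w b) := mul_comm _ _
        _ ≤ 2 * hlMaximal n f x := mul_le_mul_right hTb 2
    · have h0 : outerOp F R f x = 0 := by
        rw [outerOp]
        convert tsum_zero with i
        rw [indicator_of_notMem (fun h => hex ⟨i, h⟩), mul_zero]
      rw [h0]; exact zero_le

/-- if `M : L^{q'}(u^{1-q'}) → L^{p'}(v^{1-p'})`, then the outer
truncations `T^R` of sparse operators satisfy the dual Sawyer testing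
condition, with constant depending only on `n, p, q` and the norm of `M`. -/
theorem stmt13 (n : ℕ) (p q p' q' : ℝ) (hp : 1 < p) (hpq : p < q)
    (hp' : p' = p / (p - 1)) (hq' : q' = q / (q - 1))
    (N : ℝ≥0∞) (hN : N ≠ ⊤) :
    ∃ C : ℝ≥0∞, C ≠ ⊤ ∧
      ∀ u v : (Fin n → ℝ) → ℝ≥0∞,
        (∀ f : (Fin n → ℝ) → ℝ≥0∞,
          (∫⁻ x, hlMaximal n f x ^ p' * v x ^ (1 - p')) ^ (1 / p')
            ≤ N * (∫⁻ x, f x ^ q' * u x ^ (1 - q')) ^ (1 / q')) →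
        ∀ (D : DyadicGrid n) (F : ℤ → Set (Set (Fin n → ℝ))), IsSparse D F →
          ∀ R ∈ D.carrier,
            (∫⁻ x, outerOp F R (R.indicator u) x ^ p' * v x ^ (1 - p')) ^ (1 / p')
              ≤ C * (∫⁻ x in R, u x) ^ (1 / q') := by
  have hq1 : 1 < q := hp.trans hpq
  have hp'pos : 0 < p' := by
    rw [hp']; exact div_pos (lt_trans zero_lt_one hp) (sub_pos.mpr hp)
  have hq'1 : 1 < q' := by
    rw [hq', lt_div_iff₀ (sub_pos.mpr hq1)]; linarith
  have hq'pos : 0 < q' := lt_trans zero_lt_one hq'1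
  refine ⟨2 * N, ENNReal.mul_ne_top (by simp) hN, ?_⟩
  intro u v hM D F hSp R hRmem
  obtain ⟨aR, kR, hRc⟩ := D.shape R hRmem
  have hRmeas : MeasurableSet R := hRc ▸ measurableSet_cube n aR _
  set f : (Fin n → ℝ) → ℝ≥0∞ := R.indicator u with hf
  have h2top : (2:ℝ≥0∞) ^ p' ≠ ⊤ := ENNReal.rpow_ne_top_of_nonneg hp'pos.le (by simp)
  have hpw : ∀ x, f x ^ q' * u x ^ (1 - q') ≤ f x := by
    intro x
    by_cases hx : x ∈ R
    · rw [hf]; simp only [indicator_of_mem hx]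
      rcases eq_or_ne (u x) 0 with h0 | h0
      · rw [h0, ENNReal.zero_rpow_of_pos hq'pos, zero_mul]
      rcases eq_or_ne (u x) ⊤ with ht | ht
      · rw [ht]; exact le_top
      · rw [← ENNReal.rpow_add q' (1 - q') h0 ht]
        have : q' + (1 - q') = 1 := by ring
        rw [this, ENNReal.rpow_one]
    · rw [hf]; simp only [indicator_of_notMem hx]
      rw [ENNReal.zero_rpow_of_pos hq'pos, zero_mul]
  calc (∫⁻ x, outerOp F R f x ^ p' * v x ^ (1 - p')) ^ (1 / p')
      ≤ (∫⁻ x, (2 * hlMaximal n f x) ^ p' * v x ^ (1 - p')) ^ (1 / p') := by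
        refine ENNReal.rpow_le_rpow (lintegral_mono fun x => ?_) (by positivity)
        exact mul_le_mul_left
          (ENNReal.rpow_le_rpow (outer_le_two_mul_maximal D F hSp.1 R hRmem u x) hp'pos.le) _
    _ = ((2:ℝ≥0∞) ^ p' * ∫⁻ x, hlMaximal n f x ^ p' * v x ^ (1 - p')) ^ (1 / p') := by
        rw [← lintegral_const_mul' _ _ h2top]
        refine congrArg (· ^ (1/p')) (lintegral_congr fun x => ?_)
        rw [ENNReal.mul_rpow_of_nonneg _ _ hp'pos.le, mul_assoc]
    _ = 2 * (∫⁻ x, hlMaximal n f x ^ p' * v x ^ (1 - p')) ^ (1 / p') := by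
        rw [ENNReal.mul_rpow_of_nonneg _ _ (by positivity), ← ENNReal.rpow_mul,
          mul_one_div_cancel hp'pos.ne', ENNReal.rpow_one]
    _ ≤ 2 * (N * (∫⁻ x, f x ^ q' * u x ^ (1 - q')) ^ (1 / q')) := mul_le_mul_right (hM f) 2
    _ ≤ 2 * (N * (∫⁻ x in R, u x) ^ (1 / q')) := by
        refine mul_le_mul_right (mul_le_mul_right (ENNReal.rpow_le_rpow ?_ (by positivity)) N) 2
        calc ∫⁻ x, f x ^ q' * u x ^ (1 - q') ≤ ∫⁻ x, f x := lintegral_mono hpw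
          _ = ∫⁻ x in R, u x := lintegral_indicator hRmeas u
    _ = 2 * N * (∫⁻ x in R, u x) ^ (1 / q') := (mul_assoc _ _ _).symm
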